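/- Let T, X ∈ ℚ[[t]] satisfy T = 1 + tT^3 and X = tT^2(1+X+X^2) with constant terms 1 and 0 respectively, let T(u) ∈ ℚ[[t,u]] with constant term 1 satisfy T(u) = 1 + t·u·T(u)^2·T, and define H_j(u) = (1 - X^{j+1})·X·T(u) - (1+X)(1 - X^{j+2}) for j ≥ -2, and T_j(u) = T(u)·(H_j(u)/H_{j-1}(u))·((1 - X^{j+2})/(1 - X^{j+3})) for j ≥ -1. Then T_{-1}(u) = 1 and for all j ≥ 0, T_j(u) = 1 + t·u·T_{j+1}(u)·T_j(u)·T_{j-1}, where T_{j-1} = T_{j-1}(1) is given by Kuba's formula T_k = T(1 - X^{k+5})(1 - X^{k+2})/((1 - X^{k+4})(1 - X^{k+3})). -/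

import Mathlib

/-- The ring `ℚ[[t,u]]`, realized as `ℚ[[t]][[u]]`. -/
abbrev QTU : Type := PowerSeries (PowerSeries ℚ)

/-- The image of a series of `ℚ[[t]]` in `ℚ[[t,u]]`. -/
noncomputable def liftT (f : PowerSeries ℚ) : QTU := PowerSeries.C (R := PowerSeries ℚ) f

/-- The variable `t` in `ℚ[[t,u]]`. -/
noncomputable def tVar : QTU := liftT PowerSeries.X

/-- The variable `u` in `ℚ[[t,u]]`. -/
noncomputable def uVar : QTU := PowerSeries.X

lemma key_aux {R : Type*} [CommRing R] [IsDomain R] (S τ x y t u A B C : R)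
    (hA : A * ((x - y) * S - (1 + x) * (1 - y)) * (1 - x ^ 2 * y)
        = S * ((x - x * y) * S - (1 + x) * (1 - x * y)) * (1 - x * y))
    (hB : B * ((x - x * y) * S - (1 + x) * (1 - x * y)) * (1 - x ^ 3 * y)
        = S * ((x - x ^ 2 * y) * S - (1 + x) * (1 - x ^ 2 * y)) * (1 - x ^ 2 * y))
    (hC : C * ((1 - x ^ 2 * y) * (1 - x * y)) = τ * (1 - x ^ 3 * y) * (1 - y))
    (hS : S = 1 + t * u * S ^ 2 * τ)
    (h1 : ((x - y) * S - (1 + x) * (1 - y)) ≠ 0)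
    (h2 : ((x - x * y) * S - (1 + x) * (1 - x * y)) ≠ 0)
    (ha0 : (1 - x * y) ≠ 0) (ha1 : (1 - x ^ 2 * y) ≠ 0) (ha2 : (1 - x ^ 3 * y) ≠ 0) :
    A = 1 + t * u * B * A * C := by
  have hD : (((x - y) * S - (1 + x) * (1 - y)) * (1 - x ^ 2 * y)
      * (((x - x * y) * S - (1 + x) * (1 - x * y)) * (1 - x ^ 3 * y))
      * ((1 - x ^ 2 * y) * (1 - x * y))) ≠ 0 :=
    mul_ne_zero (mul_ne_zero (mul_ne_zero h1 ha1) (mul_ne_zero h2 ha2)) (mul_ne_zero ha1 ha0)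
  apply mul_right_cancel₀ hD
  set h2e := ((x - x * y) * S - (1 + x) * (1 - x * y)) with hh2
  set h3e := ((x - x ^ 2 * y) * S - (1 + x) * (1 - x ^ 2 * y)) with hh3
  linear_combination
    (h2e * (1 - x ^ 3 * y) * (1 - x ^ 2 * y) * (1 - x * y)
      - t * u * B * C * h2e * (1 - x ^ 3 * y) * (1 - x ^ 2 * y) * (1 - x * y)) * hA
    + (-(t * u) * S * h2e * (1 - x * y) * C * (1 - x ^ 2 * y) * (1 - x * y)) * hB
    + (-(t * u) * S ^ 2 * h2e * h3e * (1 - x * y) * (1 - x ^ 2 * y)) * hC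
    + (h2e * (1 - x ^ 3 * y) * (1 - x ^ 2 * y) * (1 - x * y) * h3e * (1 - y)) * hS


set_option maxHeartbeats 1600000 in
/-- The refined Kuba-type formula: with `T = 1 + tT^3`, `X = tT^2(1+X+X^2)` in `ℚ[[t]]`,
`T(u) = 1 + tuT(u)^2T` in `ℚ[[t,u]]` with constant term 1,
`H_j(u) = (1 - X^{j+1})XT(u) - (1+X)(1-X^{j+2})` for `j ≥ -2` (here `H k = H_{k-2}(u)`,
using `(1-X^{j+1})X = X - X^{j+2}` so that `j = -2` makes sense), and
`T_j(u) = T(u)·(H_j(u)/H_{j-1}(u))·((1-X^{j+2})/(1-X^{j+3}))` for `j ≥ -1`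
(here `TTu k = T_{k-1}(u)`, stated multiplicatively since the denominators are invertible),
the family satisfies `T_{-1}(u) = 1` and `T_j(u) = 1 + tu·T_{j+1}(u)·T_j(u)·T_{j-1}` for all
`j ≥ 0`, where `T_{j-1} = T_{j-1}(1)` is given by Kuba's formula
`T_k = T(1-X^{k+5})(1-X^{k+2})/((1-X^{k+4})(1-X^{k+3}))` (here `TK m = T_{m-1}`, again stated
multiplicatively). -/
theorem refined_kuba (T Xs : PowerSeries ℚ)
    (hT0 : PowerSeries.constantCoeff (R := ℚ) T = 1)
    (hT : T = 1 + PowerSeries.X * T ^ 3)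
    (hXs0 : PowerSeries.constantCoeff (R := ℚ) Xs = 0)
    (hXs : Xs = PowerSeries.X * T ^ 2 * (1 + Xs + Xs ^ 2))
    (Tu : QTU)
    (hTu0 : PowerSeries.constantCoeff (R := ℚ) (PowerSeries.constantCoeff (R := PowerSeries ℚ) Tu) = 1)
    (hTu : Tu = 1 + tVar * uVar * Tu ^ 2 * liftT T)
    (H : ℕ → QTU)
    (hH : ∀ k : ℕ, H k = (liftT Xs - liftT (Xs ^ k)) * Tu - (1 + liftT Xs) * (1 - liftT (Xs ^ k)))
    (TTu : ℕ → QTU)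
    (hTTu : ∀ k : ℕ, TTu k * H k * (1 - liftT (Xs ^ (k + 2)))
        = Tu * H (k + 1) * (1 - liftT (Xs ^ (k + 1))))
    (TK : ℕ → PowerSeries ℚ)
    (hTK : ∀ m : ℕ, TK m * ((1 - Xs ^ (m + 3)) * (1 - Xs ^ (m + 2)))
        = T * (1 - Xs ^ (m + 4)) * (1 - Xs ^ (m + 1))) :
    TTu 0 = 1 ∧
      ∀ j : ℕ, TTu (j + 1) = 1 + tVar * uVar * TTu (j + 2) * TTu (j + 1) * liftT (TK j) := by
  have hpow : ∀ (f : PowerSeries ℚ) (n : ℕ), liftT (f ^ n) = liftT f ^ n :=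
    fun f n => map_pow (PowerSeries.C (R := PowerSeries ℚ)) f n
  have hmul : ∀ a b : PowerSeries ℚ, liftT (a * b) = liftT a * liftT b :=
    fun a b => map_mul (PowerSeries.C (R := PowerSeries ℚ)) a b
  have hsub : ∀ a b : PowerSeries ℚ, liftT (a - b) = liftT a - liftT b :=
    fun a b => map_sub (PowerSeries.C (R := PowerSeries ℚ)) a b
  have hone : liftT 1 = 1 := map_one (PowerSeries.C (R := PowerSeries ℚ))
  -- the double-constant-coefficient map
  have hzx : ∀ z : QTU,
      PowerSeries.constantCoeff (R := ℚ) (PowerSeries.constantCoeff (R := PowerSeries ℚ) z) = 0 →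
      ((liftT Xs - z) * Tu - (1 + liftT Xs) * (1 - z)) ≠ 0 := by
    intro z hz h
    have h2 := congrArg (fun w : QTU =>
      PowerSeries.constantCoeff (R := ℚ) (PowerSeries.constantCoeff (R := PowerSeries ℚ) w)) h
    simp only [map_sub, map_mul, map_add, map_one, map_zero, liftT,
      PowerSeries.constantCoeff_C, hXs0, hTu0, hz] at h2
    norm_num at h2
  have hax : ∀ z : QTU,
      PowerSeries.constantCoeff (R := ℚ) (PowerSeries.constantCoeff (R := PowerSeries ℚ) z) = 0 →
      ((1 : QTU) - z) ≠ 0 := by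
    intro z hz h
    have h2 := congrArg (fun w : QTU =>
      PowerSeries.constantCoeff (R := ℚ) (PowerSeries.constantCoeff (R := PowerSeries ℚ) w)) h
    simp only [map_sub, map_one, map_zero, hz] at h2
    norm_num at h2
  have hzpow : ∀ n : ℕ,
      PowerSeries.constantCoeff (R := ℚ)
        (PowerSeries.constantCoeff (R := PowerSeries ℚ) ((liftT Xs) ^ (n + 1))) = 0 := by
    intro n
    simp [liftT, map_pow, PowerSeries.constantCoeff_C, hXs0, zero_pow (Nat.succ_ne_zero n)]
  have hz0 : PowerSeries.constantCoeff (R := ℚ)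
      (PowerSeries.constantCoeff (R := PowerSeries ℚ) (liftT Xs)) = 0 := by
    simp [liftT, PowerSeries.constantCoeff_C, hXs0]
  constructor
  · -- TTu 0 = 1
    have e := hTTu 0
    rw [hH 0, hH 1] at e
    simp only [hpow] at e
    have hTune : Tu ≠ 0 := by
      intro h
      rw [h] at hTu0
      simp at hTu0
    have hx1 : (liftT Xs - 1) ≠ 0 := by
      intro h
      have h2 := congrArg (fun w : QTU =>
        PowerSeries.constantCoeff (R := ℚ) (PowerSeries.constantCoeff (R := PowerSeries ℚ) w)) h
      simp only [map_sub, map_one, map_zero, liftT, PowerSeries.constantCoeff_C, hXs0] at h2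
      norm_num at h2
    have hx2 : ((1 : QTU) - (liftT Xs) ^ 2) ≠ 0 := by
      apply hax
      simp [liftT, map_pow, PowerSeries.constantCoeff_C, hXs0]
    have hC0 : ((liftT Xs - 1) * Tu * (1 - (liftT Xs) ^ 2)) ≠ 0 :=
      mul_ne_zero (mul_ne_zero hx1 hTune) hx2
    apply mul_right_cancel₀ hC0
    linear_combination e
  · intro j
    have eA := hTTu (j + 1)
    rw [hH (j + 1), hH (j + 2)] at eA
    simp only [hpow] at eA
    have eB := hTTu (j + 2)
    rw [hH (j + 2), hH (j + 3)] at eB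
    simp only [hpow] at eB
    have eC := congrArg liftT (hTK j)
    simp only [hmul, hsub, hone, hpow] at eC
    refine key_aux Tu (liftT T) (liftT Xs) ((liftT Xs) ^ (j + 1)) tVar uVar
      (TTu (j + 1)) (TTu (j + 2)) (liftT (TK j)) ?_ ?_ ?_ hTu ?_ ?_ ?_ ?_ ?_
    · linear_combination eA
    · linear_combination eB
    · linear_combination eC
    · exact hzx _ (hzpow j)
    · exact hzx _ (by simp [map_mul, map_pow, hz0])
    · exact hax _ (by simp [map_mul, map_pow, hz0])
    · exact hax _ (by simp [map_mul, map_pow, hz0])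
    · exact hax _ (by simp [map_mul, map_pow, hz0])
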